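/- Let 𝒳 ⊆ L⁰₊, let Y ∈ L⁰₊ satisfy Y > 0 P-a.s., and for W ∈ L⁰₊ define O_W^𝒳 := sc{(X − W)₊ : X ∈ 𝒳}. Then ⋂ₙ O_n^𝒳 = {0} if and only if ⋂ₙ O_{nY}^𝒳 = {0}, where 'S = {0}' means the only element of L⁰₊ belonging to S is 0 a.e. -/
import Mathlib


open MeasureTheory Filter Topology

/-- `L⁰₊`: (representatives of) measurable functions that are nonnegative `P`-a.s. -/
def L0pos {Ω : Type*} [MeasurableSpace Ω] (P : Measure Ω) : Set (Ω → ℝ) :=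
  {X | Measurable X ∧ ∀ᵐ ω ∂P, 0 ≤ X ω}

/-- `sc S`: the solid hull of the convex hull of `S`. -/
def scSet {Ω : Type*} [MeasurableSpace Ω] (P : Measure Ω) (S : Set (Ω → ℝ)) :
    Set (Ω → ℝ) :=
  {Z | Z ∈ L0pos P ∧ ∃ W ∈ convexHull ℝ S, ∀ᵐ ω ∂P, Z ω ≤ W ω}

/-- `O_W^𝒳 = sc {(X - W)₊ : X ∈ 𝒳}`. -/
def OsetW {Ω : Type*} [MeasurableSpace Ω] (P : Measure Ω) (𝒳 : Set (Ω → ℝ))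
    (W : Ω → ℝ) : Set (Ω → ℝ) :=
  scSet P {f | ∃ X ∈ 𝒳, f = fun ω => max (X ω - W ω) 0}

/-- Key monotonicity lemma: if `W₂ ≤ W₁` a.e. on a measurable set `A`, and
`Z ∈ O_{W₁}`, then the indicator `A.indicator Z ∈ O_{W₂}`. -/
lemma oset_indicator_mono {Ω : Type*} [MeasurableSpace Ω] (P : Measure Ω)
    (𝒳 : Set (Ω → ℝ)) (W₁ W₂ : Ω → ℝ) (A : Set Ω) (hA : MeasurableSet A)
    (hle : ∀ᵐ ω ∂P, ω ∈ A → W₂ ω ≤ W₁ ω) {Z : Ω → ℝ}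
    (hZ : Z ∈ OsetW P 𝒳 W₁) : A.indicator Z ∈ OsetW P 𝒳 W₂ := by
  classical
  obtain ⟨⟨hm, hnn⟩, W, hWmem, hWle⟩ := hZ
  rw [convexHull_eq] at hWmem
  obtain ⟨ι, t, w, z, hw0, hw1, hzs, hcm⟩ := hWmem
  set z' : ι → Ω → ℝ := fun i =>
    if h : ∃ X ∈ 𝒳, z i = fun ω => max (X ω - W₁ ω) 0 then
      (fun ω => max (h.choose ω - W₂ ω) 0) else fun _ => 0 with hz'
  have hz'mem : ∀ i ∈ t, z' i ∈ {f | ∃ X ∈ 𝒳, f = fun ω => max (X ω - W₂ ω) 0} := by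
    intro i hi
    have h : ∃ X ∈ 𝒳, z i = fun ω => max (X ω - W₁ ω) 0 := hzs i hi
    simp only [hz', dif_pos h]
    exact ⟨h.choose, h.choose_spec.1, rfl⟩
  have hz'nn : ∀ i (ω : Ω), 0 ≤ z' i ω := by
    intro i ω
    by_cases h : ∃ X ∈ 𝒳, z i = fun ω => max (X ω - W₁ ω) 0
    · simp only [hz', dif_pos h]; exact le_max_right _ _
    · simp only [hz', dif_neg h]; exact le_rfl
  have hzle : ∀ i ∈ t, ∀ ω, W₂ ω ≤ W₁ ω → z i ω ≤ z' i ω := by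
    intro i hi ω hW
    have h : ∃ X ∈ 𝒳, z i = fun ω => max (X ω - W₁ ω) 0 := hzs i hi
    simp only [hz', dif_pos h]
    have hzi : z i ω = max (h.choose ω - W₁ ω) 0 := congrFun h.choose_spec.2 ω
    rw [hzi]
    exact max_le_max (by linarith) le_rfl
  have hcmeval : ∀ (g : ι → Ω → ℝ) (ω : Ω),
      t.centerMass w g ω = ∑ i ∈ t, w i * g i ω := by
    intro g ω
    simp [Finset.centerMass, hw1, Finset.sum_apply]
  refine ⟨⟨hm.indicator hA, ?_⟩, t.centerMass w z',
    Finset.centerMass_mem_convexHull t hw0 (by rw [hw1]; exact one_pos) hz'mem, ?_⟩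
  · filter_upwards [hnn] with ω hω
    by_cases hωA : ω ∈ A
    · rw [Set.indicator_of_mem hωA]; exact hω
    · rw [Set.indicator_of_notMem hωA]
  · filter_upwards [hWle, hle, hnn] with ω h1 h2 h3
    rw [hcmeval]
    by_cases hω : ω ∈ A
    · rw [Set.indicator_of_mem hω]
      have hWeval : W ω = ∑ i ∈ t, w i * z i ω := by
        rw [← hcm]; exact hcmeval z ω
      calc Z ω ≤ W ω := h1
        _ = ∑ i ∈ t, w i * z i ω := hWeval
        _ ≤ ∑ i ∈ t, w i * z' i ω := Finset.sum_le_sum fun i hi =>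
            mul_le_mul_of_nonneg_left (hzle i hi ω (h2 hω)) (hw0 i hi)
    · rw [Set.indicator_of_notMem hω]
      exact Finset.sum_nonneg fun i hi => mul_nonneg (hw0 i hi) (hz'nn i ω)

/-- For a.s. strictly positive `Y`, `⋂ₙ O_n^𝒳 = {0}` iff `⋂ₙ O_{nY}^𝒳 = {0}`. -/
theorem stmt_16 {Ω : Type*} [MeasurableSpace Ω] (P : Measure Ω) [IsProbabilityMeasure P]
    (𝒳 : Set (Ω → ℝ)) (h𝒳 : 𝒳 ⊆ L0pos P)
    (Y : Ω → ℝ) (hY : Y ∈ L0pos P) (hYpos : ∀ᵐ ω ∂P, 0 < Y ω) :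
    (∀ Z : Ω → ℝ, (∀ n : ℕ, Z ∈ OsetW P 𝒳 (fun _ => (n : ℝ))) → ∀ᵐ ω ∂P, Z ω = 0) ↔
    (∀ Z : Ω → ℝ, (∀ n : ℕ, Z ∈ OsetW P 𝒳 (fun ω => n * Y ω)) → ∀ᵐ ω ∂P, Z ω = 0) := by
  have hYm : Measurable Y := hY.1
  constructor
  · intro H Z hZ
    set A : ℕ → Set Ω := fun k => Y ⁻¹' Set.Ici (1 / ((k : ℝ) + 1)) with hA
    have key : ∀ k : ℕ, ∀ᵐ ω ∂P, (A k).indicator Z ω = 0 := by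
      intro k
      apply H
      intro m
      refine oset_indicator_mono P 𝒳 (fun ω => ((m * (k + 1) : ℕ) : ℝ) * Y ω)
        (fun _ => (m : ℝ)) (A k) (hYm measurableSet_Ici) ?_ (hZ (m * (k + 1)))
      refine Filter.Eventually.of_forall fun ω hω => ?_
      have hω' : 1 / ((k : ℝ) + 1) ≤ Y ω := hω
      have hk : (0 : ℝ) < (k : ℝ) + 1 := by positivity
      have h1 : (1 : ℝ) ≤ Y ω * ((k : ℝ) + 1) := (div_le_iff₀ hk).mp hω'
      push_cast
      nlinarith [Nat.cast_nonneg (α := ℝ) m]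
    have hall : ∀ᵐ ω ∂P, ∀ k : ℕ, (A k).indicator Z ω = 0 := ae_all_iff.2 key
    filter_upwards [hall, hYpos] with ω hω hYω
    obtain ⟨k, hk⟩ := exists_nat_gt (1 / Y ω)
    have hmem : ω ∈ A k := by
      show 1 / ((k : ℝ) + 1) ≤ Y ω
      rw [div_le_iff₀ (by positivity)]
      rw [div_lt_iff₀ hYω] at hk
      nlinarith
    have := hω k
    rwa [Set.indicator_of_mem hmem] at this
  · intro H Z hZ
    set A : ℕ → Set Ω := fun k => Y ⁻¹' Set.Iic ((k : ℝ) + 1) with hA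
    have key : ∀ k : ℕ, ∀ᵐ ω ∂P, (A k).indicator Z ω = 0 := by
      intro k
      apply H
      intro n
      refine oset_indicator_mono P 𝒳 (fun _ => ((n * (k + 1) : ℕ) : ℝ))
        (fun ω => (n : ℝ) * Y ω) (A k) (hYm measurableSet_Iic) ?_ (hZ (n * (k + 1)))
      refine Filter.Eventually.of_forall fun ω hω => ?_
      have hω' : Y ω ≤ (k : ℝ) + 1 := hω
      push_cast
      nlinarith [Nat.cast_nonneg (α := ℝ) n]
    have hall : ∀ᵐ ω ∂P, ∀ k : ℕ, (A k).indicator Z ω = 0 := ae_all_iff.2 key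
    filter_upwards [hall] with ω hω
    obtain ⟨k, hk⟩ := exists_nat_ge (Y ω)
    have hmem : ω ∈ A k := by
      show Y ω ≤ (k : ℝ) + 1
      linarith
    have := hω k
    rwa [Set.indicator_of_mem hmem] at this
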